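/- Let ‖ω‖ > 0 be a real constant and k ∈ ℝ. The pair of functions u(t) = i t^{(k+1)/2} K_{(k-1)/2}(‖ω‖ t), v(t) = ‖ω‖^{-1} t^{(k+1)/2} K_{(k+1)/2}(‖ω‖ t) (complex-valued, t > 0) solves the system u' = -i‖ω‖² v + (k/t) u, v' = i u, where K_ν denotes the modified Bessel function of the second kind. -/

import Mathlib

open Real Complex MeasureTheory Set Filter Metric

/-- The modified Bessel function of the second kind,
`K_ν(z) = ∫₀^∞ e^{-z cosh t} cosh(ν t) dt` (for `z > 0`). -/
noncomputable def besselK (ν z : ℝ) : ℝ :=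
  ∫ t in Set.Ioi (0 : ℝ), Real.exp (-z * Real.cosh t) * Real.cosh (ν * t)


lemma cosh_ge_quadratic (t : ℝ) : 1 + t^2/2 ≤ Real.cosh t := by
  have h := Real.cosh_two_mul (t/2)
  have h2 : Real.cosh (t/2) ^ 2 = Real.sinh (t/2)^2 + 1 := Real.cosh_sq _
  have h3 : (t/2)^2 ≤ Real.sinh (t/2)^2 := by
    rcases le_or_gt 0 (t/2) with h'|h'
    · nlinarith [Real.self_le_sinh_iff.2 h']
    · have := Real.self_le_sinh_iff.2 (by linarith : (0:ℝ) ≤ -(t/2))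
      rw [Real.sinh_neg] at this; nlinarith
  have : Real.cosh t = Real.cosh (2 * (t/2)) := by rw [mul_div_cancel₀]; norm_num
  rw [this, h, h2]; nlinarith

lemma cosh_le_exp_abs (t : ℝ) : Real.cosh t ≤ Real.exp |t| := by
  rw [Real.cosh_eq]
  have h1 : Real.exp t ≤ Real.exp |t| := Real.exp_le_exp.2 (le_abs_self t)
  have h2 : Real.exp (-t) ≤ Real.exp |t| := Real.exp_le_exp.2 (neg_le_abs t)
  linarith

lemma cosh_mul_cosh (ν t : ℝ) :
    Real.cosh t * Real.cosh (ν*t) = (Real.cosh ((ν+1)*t) + Real.cosh ((ν-1)*t))/2 := by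
  rw [show (ν+1)*t = ν*t + t by ring, show (ν-1)*t = ν*t - t by ring,
    Real.cosh_add, Real.cosh_sub]; ring

lemma sinh_mul_sinh (ν t : ℝ) :
    Real.sinh t * Real.sinh (ν*t) = (Real.cosh ((ν+1)*t) - Real.cosh ((ν-1)*t))/2 := by
  rw [show (ν+1)*t = ν*t + t by ring, show (ν-1)*t = ν*t - t by ring,
    Real.cosh_add, Real.cosh_sub]; ring

lemma besselK_bound (ν z t : ℝ) (hz : 0 < z) (ht : 0 ≤ t) :
    Real.exp (-z * Real.cosh t) * Real.cosh (ν*t)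
      ≤ Real.exp (ν^2/(2*z) - z) * Real.exp (-(z/2) * (t - |ν|/z)^2) := by
  have h1 : Real.exp (-z * Real.cosh t) ≤ Real.exp (-z * (1 + t^2/2)) :=
    Real.exp_le_exp.2 (by nlinarith [cosh_ge_quadratic t])
  have h2 : Real.cosh (ν*t) ≤ Real.exp (|ν| * t) := by
    calc Real.cosh (ν*t) ≤ Real.exp |ν*t| := cosh_le_exp_abs _
    _ = Real.exp (|ν| * t) := by rw [_root_.abs_mul, _root_.abs_of_nonneg ht]
  calc Real.exp (-z * Real.cosh t) * Real.cosh (ν*t)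
      ≤ Real.exp (-z * (1 + t^2/2)) * Real.exp (|ν| * t) := by
        apply mul_le_mul h1 h2 (by positivity) (Real.exp_pos _).le
    _ = Real.exp (ν^2/(2*z) - z) * Real.exp (-(z/2) * (t - |ν|/z)^2) := by
        rw [← Real.exp_add, ← Real.exp_add]
        congr 1
        have : |ν|^2 = ν^2 := _root_.sq_abs ν
        field_simp
        ring_nf
        nlinarith [_root_.sq_abs ν]

lemma gauss_integrable (z a c : ℝ) (hz : 0 < z) :
    Integrable (fun t : ℝ => Real.exp c * Real.exp (-(z/2) * (t - a)^2)) := by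
  exact ((integrable_exp_neg_mul_sq (by positivity : (0:ℝ) < z/2)).comp_sub_right a).const_mul _

lemma besselK_integrand_continuous (ν z : ℝ) :
    Continuous (fun t => Real.exp (-z * Real.cosh t) * Real.cosh (ν*t)) := by
  fun_prop

lemma besselK_integrable (ν z : ℝ) (hz : 0 < z) :
    IntegrableOn (fun t => Real.exp (-z * Real.cosh t) * Real.cosh (ν*t)) (Ioi 0) := by
  apply Integrable.mono' ((gauss_integrable z (|ν|/z) (ν^2/(2*z) - z) hz).integrableOn)
    ((besselK_integrand_continuous ν z).aestronglyMeasurable)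
  filter_upwards [ae_restrict_mem measurableSet_Ioi] with t ht
  rw [Real.norm_eq_abs, _root_.abs_of_nonneg (by positivity)]
  exact besselK_bound ν z t hz (le_of_lt ht)





lemma besselK_hasDerivAt (ν z : ℝ) (hz : 0 < z) :
    HasDerivAt (besselK ν) (-(besselK (ν-1) z + besselK (ν+1) z)/2) z := by
  have key := hasDerivAt_integral_of_dominated_loc_of_deriv_le
    (μ := volume.restrict (Ioi (0:ℝ)))
    (F := fun x t => Real.exp (-x * Real.cosh t) * Real.cosh (ν*t))
    (F' := fun x t => -Real.cosh t * (Real.exp (-x * Real.cosh t) * Real.cosh (ν*t)))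
    (x₀ := z) (s := ball z (z/2))
    (bound := fun t => Real.cosh t * (Real.exp (-(z/2) * Real.cosh t) * Real.cosh (ν*t)))
    (ball_mem_nhds z (by positivity))
    (Eventually.of_forall fun x => (besselK_integrand_continuous ν x).aestronglyMeasurable)
    (besselK_integrable ν z hz)
    (by
      apply Continuous.aestronglyMeasurable
      exact (Real.continuous_cosh.neg).mul (besselK_integrand_continuous ν z))
    (by
      refine Eventually.of_forall fun t => fun x hx => ?_
      rw [Real.ball_eq_Ioo] at hx
      have hx2 : z/2 ≤ x := by linarith [hx.1]
      rw [Real.norm_eq_abs, _root_.abs_mul, _root_.abs_neg, _root_.abs_of_nonneg (Real.cosh_pos t).le,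
        _root_.abs_of_nonneg (by positivity)]
      have hexp : Real.exp (-x * Real.cosh t) ≤ Real.exp (-(z/2) * Real.cosh t) :=
        Real.exp_le_exp.2 (by nlinarith [Real.cosh_pos t])
      exact mul_le_mul_of_nonneg_left
        (mul_le_mul_of_nonneg_right hexp (Real.cosh_pos (ν*t)).le) (Real.cosh_pos t).le
    )
    (by
      have : (fun t => Real.cosh t * (Real.exp (-(z/2) * Real.cosh t) * Real.cosh (ν*t)))
          = fun t => ((Real.exp (-(z/2) * Real.cosh t) * Real.cosh ((ν+1)*t))
            + (Real.exp (-(z/2) * Real.cosh t) * Real.cosh ((ν-1)*t)))/2 := by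
        funext t
        rw [show Real.cosh t * (Real.exp (-(z/2) * Real.cosh t) * Real.cosh (ν*t))
          = Real.exp (-(z/2) * Real.cosh t) * (Real.cosh t * Real.cosh (ν*t)) by ring,
          cosh_mul_cosh]; ring
      rw [this]
      exact ((besselK_integrable (ν+1) (z/2) (by positivity)).add
        (besselK_integrable (ν-1) (z/2) (by positivity))).div_const 2)
    (by
      refine Eventually.of_forall fun t => fun x _ => ?_
      have h1 : HasDerivAt (fun x : ℝ => Real.exp (-x * Real.cosh t))
          (Real.exp (-x * Real.cosh t) * (-1 * Real.cosh t)) x :=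
        ((hasDerivAt_neg x).mul_const (Real.cosh t)).exp
      have := h1.mul_const (Real.cosh (ν*t))
      refine this.congr_deriv (Eq.symm ?_)
      ring)
  have heq : (fun n => ∫ t in Ioi (0:ℝ), Real.exp (-n * Real.cosh t) * Real.cosh (ν*t))
      = besselK ν := rfl
  have hI : (∫ t in Ioi (0:ℝ), -Real.cosh t * (Real.exp (-z * Real.cosh t) * Real.cosh (ν*t)))
      = -(besselK (ν-1) z + besselK (ν+1) z)/2 := by
    rw [show (fun t => -Real.cosh t * (Real.exp (-z * Real.cosh t) * Real.cosh (ν*t)))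
        = fun t => (-(1/2:ℝ)) * (Real.exp (-z * Real.cosh t) * Real.cosh ((ν+1)*t))
          + (-(1/2:ℝ)) * (Real.exp (-z * Real.cosh t) * Real.cosh ((ν-1)*t)) from
      funext fun t => by
        rw [show -Real.cosh t * (Real.exp (-z * Real.cosh t) * Real.cosh (ν*t))
          = -(Real.exp (-z * Real.cosh t) * (Real.cosh t * Real.cosh (ν*t))) by ring,
          cosh_mul_cosh]; ring]
    rw [integral_add ((besselK_integrable (ν+1) z hz).const_mul _)
      ((besselK_integrable (ν-1) z hz).const_mul _), integral_const_mul, integral_const_mul]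
    unfold besselK; ring
  rw [← heq, ← hI]
  exact key.2





lemma besselK_recurrence (ν z : ℝ) (hz : 0 < z) :
    ν * besselK ν z = z/2 * (besselK (ν+1) z - besselK (ν-1) z) := by
  set F : ℝ → ℝ := fun t => Real.exp (-z * Real.cosh t) * Real.sinh (ν*t) with hF
  set F' : ℝ → ℝ := fun t => ν * (Real.exp (-z * Real.cosh t) * Real.cosh (ν*t))
      - z/2 * ((Real.exp (-z * Real.cosh t) * Real.cosh ((ν+1)*t))
        - (Real.exp (-z * Real.cosh t) * Real.cosh ((ν-1)*t))) with hF'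
  have hderiv : ∀ t ∈ Ici (0:ℝ), HasDerivAt F (F' t) t := by
    intro t _
    have h1 : HasDerivAt (fun t : ℝ => Real.exp (-z * Real.cosh t))
        (Real.exp (-z * Real.cosh t) * (-z * Real.sinh t)) t :=
      ((Real.hasDerivAt_cosh t).const_mul (-z)).exp
    have h2 : HasDerivAt (fun t : ℝ => Real.sinh (ν*t)) (Real.cosh (ν*t) * (ν*1)) t := by
      simpa using ((hasDerivAt_id t).const_mul ν).sinh
    have := h1.mul h2
    refine this.congr_deriv (Eq.symm ?_)
    rw [hF']
    have hs : z * (Real.sinh t * Real.sinh (ν*t))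
        = z * ((Real.cosh ((ν+1)*t) - Real.cosh ((ν-1)*t))/2) := by rw [sinh_mul_sinh]
    linear_combination Real.exp (-z * Real.cosh t) * hs
  have hint : IntegrableOn F' (Ioi (0:ℝ)) := by
    apply Integrable.sub
    · exact (besselK_integrable ν z hz).const_mul ν
    · exact (((besselK_integrable (ν+1) z hz).sub
        (besselK_integrable (ν-1) z hz))).const_mul (z/2)
  have htend : Tendsto F atTop (nhds 0) := by
    apply squeeze_zero_norm' (a := fun t =>
      Real.exp (ν^2/(2*z) - z) * Real.exp (-(z/2) * (t - |ν|/z)^2))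
    · filter_upwards [eventually_ge_atTop (0:ℝ)] with t ht
      rw [hF, Real.norm_eq_abs, _root_.abs_mul, _root_.abs_of_nonneg (Real.exp_pos _).le]
      calc Real.exp (-z * Real.cosh t) * |Real.sinh (ν*t)|
          ≤ Real.exp (-z * Real.cosh t) * Real.cosh (ν*t) := by
            apply mul_le_mul_of_nonneg_left _ (Real.exp_pos _).le
            rw [Real.abs_sinh, ← Real.cosh_abs (ν*t)]
            exact (Real.sinh_lt_cosh _).le
        _ ≤ _ := besselK_bound ν z t hz ht
    · rw [show (0:ℝ) = Real.exp (ν^2/(2*z) - z) * 0 by ring]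
      apply Tendsto.const_mul
      apply Real.tendsto_exp_atBot.comp
      have hsq : Tendsto (fun t : ℝ => (t - |ν|/z)^2) atTop atTop :=
        (tendsto_pow_atTop two_ne_zero).comp (tendsto_atTop_add_const_right _ _ tendsto_id)
      exact (tendsto_const_mul_atBot_of_neg (by linarith : -(z/2) < (0:ℝ))).2 hsq
  have h0 : F 0 = 0 := by simp [hF]
  have := integral_Ioi_of_hasDerivAt_of_tendsto' hderiv hint htend
  rw [h0, sub_zero] at this
  have hsplit : (∫ t in Ioi (0:ℝ), F' t)
      = ν * besselK ν z - z/2 * (besselK (ν+1) z - besselK (ν-1) z) := by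
    have i2 : IntegrableOn (fun t => Real.exp (-z * Real.cosh t) * Real.cosh ((ν+1)*t)
        - Real.exp (-z * Real.cosh t) * Real.cosh ((ν-1)*t)) (Ioi 0) :=
      (besselK_integrable (ν+1) z hz).sub (besselK_integrable (ν-1) z hz)
    rw [hF']
    rw [integral_sub ((besselK_integrable ν z hz).const_mul ν) (i2.const_mul (z/2)),
      integral_const_mul, integral_const_mul,
      integral_sub (besselK_integrable (ν+1) z hz) (besselK_integrable (ν-1) z hz)]
    rfl
  rw [hsplit] at this
  linarith





/-- for `‖ω‖ > 0` and `k ∈ ℝ`, the pair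
`u(t) = i t^{(k+1)/2} K_{(k-1)/2}(‖ω‖ t)`, `v(t) = ‖ω‖⁻¹ t^{(k+1)/2} K_{(k+1)/2}(‖ω‖ t)`
solves the system `u' = -i‖ω‖² v + (k/t) u`, `v' = i u` on `(0,∞)`. -/
theorem bessel_system_one (w k : ℝ) (hw : 0 < w) :
    ∀ t : ℝ, 0 < t →
      HasDerivAt (fun t : ℝ => (Complex.I * ((t ^ ((k + 1) / 2) : ℝ) : ℂ) *
          ((besselK ((k - 1) / 2) (w * t) : ℝ) : ℂ)))
        (-Complex.I * ((w : ℂ)) ^ 2 *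
            (((w⁻¹ : ℝ) : ℂ) * ((t ^ ((k + 1) / 2) : ℝ) : ℂ) *
              ((besselK ((k + 1) / 2) (w * t) : ℝ) : ℂ)) +
          ((k : ℂ) / (t : ℂ)) *
            (Complex.I * ((t ^ ((k + 1) / 2) : ℝ) : ℂ) *
              ((besselK ((k - 1) / 2) (w * t) : ℝ) : ℂ))) t ∧
      HasDerivAt (fun t : ℝ => (((w⁻¹ : ℝ) : ℂ) * ((t ^ ((k + 1) / 2) : ℝ) : ℂ) *
          ((besselK ((k + 1) / 2) (w * t) : ℝ) : ℂ)))
        (Complex.I * (Complex.I * ((t ^ ((k + 1) / 2) : ℝ) : ℂ) *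
          ((besselK ((k - 1) / 2) (w * t) : ℝ) : ℂ))) t := by
  intro t ht
  have hwt : 0 < w * t := by positivity
  have ht' : t ≠ 0 := ht.ne'
  -- derivative of the rpow factor
  have hp : HasDerivAt (fun s : ℝ => s ^ ((k+1)/2)) ((k+1)/2 * t ^ ((k+1)/2 - 1)) t :=
    Real.hasDerivAt_rpow_const (Or.inl ht')
  -- derivative of s ↦ besselK ν (w s)
  have hcomp : ∀ ν : ℝ, HasDerivAt (fun s : ℝ => besselK ν (w*s))
      (-(besselK (ν-1) (w*t) + besselK (ν+1) (w*t))/2 * w) t := by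
    intro ν
    have h1 : HasDerivAt (fun s : ℝ => w * s) (w * 1) t := (hasDerivAt_id t).const_mul w
    have := (besselK_hasDerivAt ν (w*t) hwt).comp t (by simpa using h1)
    simpa [Function.comp_def] using this
  -- the exponent identity
  have e1 : t ^ ((k+1)/2) = t ^ ((k+1)/2 - 1) * t := by
    rw [← Real.rpow_add_one ht' ((k+1)/2 - 1)]; norm_num
  -- real derivative for u
  have hu : HasDerivAt (fun s : ℝ => s ^ ((k+1)/2) * besselK ((k-1)/2) (w*s))
      (-w * t ^ ((k+1)/2) * besselK ((k+1)/2) (w*t)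
        + k * t ^ ((k+1)/2 - 1) * besselK ((k-1)/2) (w*t)) t := by
    have := hp.mul (hcomp ((k-1)/2))
    rw [show (k-1)/2 + 1 = (k+1)/2 by ring] at this
    refine this.congr_deriv (Eq.symm ?_)
    have hrec := besselK_recurrence ((k-1)/2) (w*t) hwt
    rw [show (k-1)/2 + 1 = (k+1)/2 by ring] at hrec
    rw [e1]
    linear_combination (t ^ ((k+1)/2 - 1)) * hrec
  -- real derivative for v (without the w⁻¹ factor)
  have e1' : t ^ ((k+1)/2) = t ^ ((k-1)/2) * t := by
    rw [show (k-1)/2 = (k+1)/2 - 1 by ring, ← Real.rpow_add_one ht']; norm_num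
  have hv : HasDerivAt (fun s : ℝ => s ^ ((k+1)/2) * besselK ((k+1)/2) (w*s))
      (-w * (t ^ ((k+1)/2) * besselK ((k-1)/2) (w*t))) t := by
    have := hp.mul (hcomp ((k+1)/2))
    rw [show (k+1)/2 - 1 = (k-1)/2 by ring] at this
    refine this.congr_deriv (Eq.symm ?_)
    have hrec := besselK_recurrence ((k+1)/2) (w*t) hwt
    rw [show (k+1)/2 - 1 = (k-1)/2 by ring] at hrec
    rw [e1']
    linear_combination (-(t ^ ((k-1)/2))) * hrec
  constructor
  · -- u equation
    have h := (hu.ofReal_comp).const_mul Complex.I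
    have hfun : (fun s : ℝ => Complex.I * ((s ^ ((k + 1) / 2) : ℝ) : ℂ) *
        ((besselK ((k - 1) / 2) (w * s) : ℝ) : ℂ))
        = fun s : ℝ => Complex.I * (((s ^ ((k+1)/2) * besselK ((k-1)/2) (w*s) : ℝ)) : ℂ) := by
      funext s; push_cast; ring
    rw [hfun]
    refine h.congr_deriv (Eq.symm ?_)
    have e1c : ((t ^ ((k+1)/2) : ℝ) : ℂ) = ((t ^ ((k+1)/2 - 1) : ℝ) : ℂ) * (t : ℂ) := by
      rw [e1]; push_cast; ring
    have htc : (t : ℂ) ≠ 0 := Complex.ofReal_ne_zero.2 ht'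
    have hwc : (w : ℂ) ≠ 0 := Complex.ofReal_ne_zero.2 hw.ne'
    push_cast
    rw [e1c]
    field_simp
  · -- v equation
    have h := (hv.ofReal_comp).const_mul ((w⁻¹ : ℝ) : ℂ)
    have hfun : (fun s : ℝ => ((w⁻¹ : ℝ) : ℂ) * ((s ^ ((k + 1) / 2) : ℝ) : ℂ) *
        ((besselK ((k + 1) / 2) (w * s) : ℝ) : ℂ))
        = fun s : ℝ => ((w⁻¹ : ℝ) : ℂ) *
            (((s ^ ((k+1)/2) * besselK ((k+1)/2) (w*s) : ℝ)) : ℂ) := by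
      funext s; push_cast; ring
    rw [hfun]
    refine h.congr_deriv (Eq.symm ?_)
    have hwc : (w : ℂ) ≠ 0 := Complex.ofReal_ne_zero.2 hw.ne'
    push_cast
    field_simp
    linear_combination (((t ^ ((k+1)/2) : ℝ) : ℂ) * ((besselK ((k-1)/2) (w*t) : ℝ) : ℂ)
      ) * Complex.I_sq
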